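/- Let λ₀ ≤ 0 ≤ λ₁ be real numbers with λ₀ ≠ λ₁ and a < b. Define f(t) = Φ(t - b)/Φ(a - b) + Φ(t - a)/Φ(b - a) with Φ = Φ_{(λ₀,λ₁)}. Then f(t) ≤ 1 for all t ∈ [a, b]. -/
import Mathlib


open Real Set

lemma exp_interp_aux (θ M : ℝ) (h0 : 0 ≤ θ) (h1 : θ ≤ 1) :
    Real.exp (θ * M) ≤ (1 - θ) + θ * Real.exp M := by
  have h := convexOn_exp.2 (Set.mem_univ (0:ℝ)) (Set.mem_univ M)
    (by linarith : (0:ℝ) ≤ 1 - θ) h0 (by ring)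
  simpa using h

theorem stmt_4 (l0 l1 a b : ℝ) (h0 : l0 ≤ 0) (h1 : 0 ≤ l1) (hne : l0 ≠ l1)
    (hab : a < b) :
    let Φ : ℝ → ℝ := fun t => (Real.exp (l1 * t) - Real.exp (l0 * t)) / (l1 - l0)
    let f : ℝ → ℝ := fun t => Φ (t - b) / Φ (a - b) + Φ (t - a) / Φ (b - a)
    ∀ t ∈ Set.Icc a b, f t ≤ 1 := by
  intro Φ f t ht
  obtain ⟨hta, htb⟩ := ht
  have hl : l0 < l1 := lt_of_le_of_ne (h0.trans h1) hne
  have hD : 0 < l1 - l0 := by linarith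
  have hc : 0 < b - a := by linarith
  set A : ℝ := Real.exp (l1 * (b - a)) with hA
  set B : ℝ := Real.exp (l0 * (b - a)) with hB
  set x : ℝ := Real.exp (l1 * (t - a)) with hx
  set y : ℝ := Real.exp (l0 * (t - a)) with hy
  have hA1 : 1 ≤ A := Real.one_le_exp (mul_nonneg h1 hc.le)
  have hB1 : B ≤ 1 := by
    rw [hB, show (1:ℝ) = Real.exp 0 by simp]
    exact Real.exp_le_exp.2 (mul_nonpos_of_nonpos_of_nonneg h0 hc.le)
  have hBA : B < A := Real.exp_lt_exp.2 (by nlinarith)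
  have hApos : 0 < A := Real.exp_pos _
  have hBpos : 0 < B := Real.exp_pos _
  set θ : ℝ := (t - a) / (b - a) with hθ
  have hθ0 : 0 ≤ θ := div_nonneg (by linarith) hc.le
  have hθ1 : θ ≤ 1 := (div_le_one hc).2 (by linarith)
  have hθc : θ * (b - a) = t - a := div_mul_cancel₀ _ hc.ne'
  -- convexity bounds
  have hxb : x ≤ (1 - θ) + θ * A := by
    have := exp_interp_aux θ (l1 * (b - a)) hθ0 hθ1
    rw [show θ * (l1 * (b - a)) = l1 * (θ * (b - a)) by ring, hθc] at this
    exact this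
  have hyb : y ≤ (1 - θ) + θ * B := by
    have := exp_interp_aux θ (l0 * (b - a)) hθ0 hθ1
    rw [show θ * (l0 * (b - a)) = l0 * (θ * (b - a)) by ring, hθc] at this
    exact this
  -- exp identities
  have e1 : x = Real.exp (l1 * (t - b)) * A := by
    rw [hx, hA, ← Real.exp_add]; ring_nf
  have e2 : y = Real.exp (l0 * (t - b)) * B := by
    rw [hy, hB, ← Real.exp_add]; ring_nf
  have e3 : Real.exp (l1 * (a - b)) * A = 1 := by
    rw [hA, ← Real.exp_add, ← Real.exp_zero]; ring_nf
  have e4 : Real.exp (l0 * (a - b)) * B = 1 := by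
    rw [hB, ← Real.exp_add, ← Real.exp_zero]; ring_nf
  -- rewrite f t
  have hfe : f t = (x * (1 - B) + y * (A - 1)) / (A - B) := by
    show Φ (t - b) / Φ (a - b) + Φ (t - a) / Φ (b - a)
        = (x * (1 - B) + y * (A - 1)) / (A - B)
    simp only [Φ]
    rw [show l1 * (b - a) = l1 * (b - a) from rfl]
    have hab1 : Real.exp (l1 * (a - b)) = 1 / A := by
      field_simp at e3 ⊢; linarith [e3]
    have hab0 : Real.exp (l0 * (a - b)) = 1 / B := by
      field_simp at e4 ⊢; linarith [e4]
    have ht1 : Real.exp (l1 * (t - b)) = x / A := by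
      rw [e1]; field_simp
    have ht0 : Real.exp (l0 * (t - b)) = y / B := by
      rw [e2]; field_simp
    rw [hab1, hab0, ht1, ht0, ← hA, ← hB, ← hx, ← hy]
    have h5 : B - A ≠ 0 := by linarith
    have h6 : A - B ≠ 0 := by linarith
    field_simp
    ring
  rw [hfe]
  rw [div_le_one (by linarith : (0:ℝ) < A - B)]
  have p1 : x * (1 - B) ≤ ((1 - θ) + θ * A) * (1 - B) :=
    mul_le_mul_of_nonneg_right hxb (by linarith)
  have p2 : y * (A - 1) ≤ ((1 - θ) + θ * B) * (A - 1) :=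
    mul_le_mul_of_nonneg_right hyb (by linarith)
  have p3 : ((1 - θ) + θ * A) * (1 - B) + ((1 - θ) + θ * B) * (A - 1) = A - B := by
    ring
  linarith
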